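/- arXiv:1607.04039 — 2 statements merged into one kernel-verified Lean document; each statement's English description precedes it below -/
import Mathlib

section
/- Suppose τ²(1,b₂) ≤ 2(2−p₁)σ²(1+(m−1)ρ)/m and τ²(−1,·) = 2σ²(1+(m−1)ρ)/m, with σ² > 0, m ≥ 1, 0 ≤ p₁ ≤ 1, and 1+(m−1)ρ > 0. Then (z_β+z_{α/2})²(τ²(1,b₂)+τ²(−1,·))/(δ²σ²) ≤ [4(z_β+z_{α/2})²/(mδ²)]·(1+(m−1)ρ)·(1+(1−p₁)/2). That is, the ADEPT sample size formula N = [4(z_β+z_{α/2})²/(mδ²)]·(1+(m−1)ρ)·(1+(1−p₁)/2) is an upper bound for the exact required sample size. -/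
theorem stmt7 (m : ℕ) (hm : 1 ≤ m) (σ2 ρ p1 δ zα zβ τ1sq τ2sq : ℝ)
    (hσ : 0 < σ2) (hp0 : 0 ≤ p1) (hp1 : p1 ≤ 1)
    (hρ : 0 < 1 + ((m : ℝ) - 1) * ρ) (hδ : 0 < δ) (hz : 0 < zβ + zα)
    (hτ1 : τ1sq ≤ 2 * (2 - p1) * σ2 * (1 + ((m : ℝ) - 1) * ρ) / m)
    (hτ2 : τ2sq = 2 * σ2 * (1 + ((m : ℝ) - 1) * ρ) / m) :
    (zβ + zα)^2 * (τ1sq + τ2sq) / (δ^2 * σ2)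
      ≤ 4 * (zβ + zα)^2 / ((m : ℝ) * δ^2) * (1 + ((m : ℝ) - 1) * ρ) * (1 + (1 - p1) / 2) := by
  have hm' : (0:ℝ) < m := by exact_mod_cast hm
  subst hτ2
  rw [div_le_iff₀ (by positivity)]
  have h1 : τ1sq * m ≤ 2 * (2 - p1) * σ2 * (1 + ((m : ℝ) - 1) * ρ) := by
    rw [← le_div_iff₀ hm']; exact hτ1
  have hz2 : 0 < (zβ + zα)^2 := by positivity
  have hδ2 : 0 < δ^2 := by positivity
  field_simp
  nlinarith [mul_le_mul_of_nonneg_right (mul_le_mul_of_nonneg_left h1 hz2.le) (by positivity : (0:ℝ) ≤ 2 * (m:ℝ) * δ^2)]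
end

section
/- Suppose for each cluster i and DTR (a₁,a₂): E_{a₁,a₂}[Y_i | X_i] = μ(X_i, a₁, a₂; θ₀) and Y_{ij} is conditionally independent of X_{ik} (k ≠ j) given X_{ij}. Then the inverse-probability-weighted estimating function U_i(θ) = Σ_{(a₁,a₂)} I_i(a₁,a₂)·W_i·D(X_i,a₁,a₂)ᵀ V(X_i,a₁,a₂)⁻¹ (Y_i − μ(X_i,a₁,a₂;θ)) satisfies E[U_i(θ₀)] = 0 for any fixed working covariance matrices V, where the expectation is under the observed-data distribution. -/
open MeasureTheory Matrix

theorem stmt14 {Ω : Type*} [MeasurableSpace Ω] {D : Type*} [Fintype D]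
    (m q : ℕ)
    (Pobs : Measure Ω) (P : D → Measure Ω) [∀ d, IsProbabilityMeasure (P d)]
    (X Y : Ω → Fin m → ℝ)
    (I : D → Ω → ℝ) (W : Ω → ℝ)
    (muvec : (Fin m → ℝ) → D → Fin m → ℝ)
    (Dmat : (Fin m → ℝ) → D → Matrix (Fin m) (Fin q) ℝ)
    (Vmat : (Fin m → ℝ) → D → Matrix (Fin m) (Fin m) ℝ)
    -- I d / W is the Radon–Nikodym derivative between the observed-data law and the
    -- law under DTR d: the change-of-measure identity for the weights.
    (hCM : ∀ (d : D) (g : Ω → ℝ), Integrable g (P d) →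
      ∫ ω, W ω * I d ω * g ω ∂Pobs = ∫ ω, g ω ∂(P d))
    -- correct specification of the marginal mean model: E_d[Y_j − μ_j(X) | X] = 0,
    -- expressed via orthogonality to every integrable function of X
    (hmean : ∀ (d : D) (j : Fin m) (h : (Fin m → ℝ) → ℝ),
      Integrable (fun ω => h (X ω) * (Y ω j - muvec (X ω) d j)) (P d) →
      ∫ ω, h (X ω) * (Y ω j - muvec (X ω) d j) ∂(P d) = 0)
    -- regularity: integrability of the estimating-function components
    (hintP : ∀ (d : D) (l : Fin q) (j : Fin m),
      Integrable (fun ω => ((Dmat (X ω) d)ᵀ * (Vmat (X ω) d)⁻¹) l j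
        * (Y ω j - muvec (X ω) d j)) (P d))
    (hintObs : ∀ (d : D) (l : Fin q),
      Integrable (fun ω => I d ω * W ω *
        ((((Dmat (X ω) d)ᵀ * (Vmat (X ω) d)⁻¹) *ᵥ
          (fun j => Y ω j - muvec (X ω) d j)) l)) Pobs) :
    ∀ l : Fin q,
      (∫ ω, ∑ d : D, I d ω * W ω *
        ((((Dmat (X ω) d)ᵀ * (Vmat (X ω) d)⁻¹) *ᵥ
          (fun j => Y ω j - muvec (X ω) d j)) l) ∂Pobs) = 0 := by
  intro l
  have hgint : ∀ d : D, Integrable (fun ω =>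
      ((((Dmat (X ω) d)ᵀ * (Vmat (X ω) d)⁻¹) *ᵥ
        (fun j => Y ω j - muvec (X ω) d j)) l)) (P d) := by
    intro d
    have : (fun ω => ((((Dmat (X ω) d)ᵀ * (Vmat (X ω) d)⁻¹) *ᵥ
        (fun j => Y ω j - muvec (X ω) d j)) l))
        = fun ω => ∑ j, ((Dmat (X ω) d)ᵀ * (Vmat (X ω) d)⁻¹) l j
          * (Y ω j - muvec (X ω) d j) := by
      funext ω; simp [Matrix.mulVec, dotProduct]
    rw [this]
    exact integrable_finset_sum _ fun j _ => hintP d l j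
  rw [integral_finset_sum _ fun d _ => hintObs d l]
  refine Finset.sum_eq_zero fun d _ => ?_
  have h1 : (∫ ω, I d ω * W ω *
      ((((Dmat (X ω) d)ᵀ * (Vmat (X ω) d)⁻¹) *ᵥ
        (fun j => Y ω j - muvec (X ω) d j)) l) ∂Pobs)
      = ∫ ω, ((((Dmat (X ω) d)ᵀ * (Vmat (X ω) d)⁻¹) *ᵥ
        (fun j => Y ω j - muvec (X ω) d j)) l) ∂(P d) := by
    rw [← hCM d _ (hgint d)]
    congr 1; funext ω; ring
  rw [h1]
  have h2 : (fun ω => ((((Dmat (X ω) d)ᵀ * (Vmat (X ω) d)⁻¹) *ᵥ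
      (fun j => Y ω j - muvec (X ω) d j)) l))
      = fun ω => ∑ j, ((Dmat (X ω) d)ᵀ * (Vmat (X ω) d)⁻¹) l j
        * (Y ω j - muvec (X ω) d j) := by
    funext ω; simp [Matrix.mulVec, dotProduct]
  rw [h2, integral_finset_sum _ fun j _ => hintP d l j]
  refine Finset.sum_eq_zero fun j _ => ?_
  exact hmean d j (fun x => ((Dmat x d)ᵀ * (Vmat x d)⁻¹) l j) (hintP d l j)
end
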